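/- Fix ρ ∈ (0,1), an integer m ≥ 1, and set d = 1−ρ. For each integer ℓ > m, define η₁(ℓ), η₂(ℓ), η₃(ℓ), η₄(ℓ) as in the context, γ(ℓ) = (η₃(ℓ) − η₂(ℓ)(1−d) + √((η₂(ℓ)(1−d) − η₃(ℓ))² + 4η₁(ℓ)d(1−d)))/(2(1−d)), and θ(ℓ) = ρ − (η₄(ℓ)γ(ℓ) + η₁(ℓ)ρ)/(γ(ℓ)² + η₂(ℓ)γ(ℓ) + η₁(ℓ)). Then, as ℓ → ∞: (i) γ(ℓ) − √m·(1−ρ)·ℓ^{m−1/2}/(m−1)! − ((1−ρ)(1+(m−2)ρ)/(2ρ))·ℓ^{m−1}/(m−1)! = O(ℓ^{m−3/2}); and (ii) θ(ℓ) − (1−ρ)/√(ℓm) + (1−ρ)(1+mρ)/(2ℓmρ) = O(ℓ^{−3/2}). -/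

import Mathlib

open Filter Asymptotics

/-- Binomial coefficient `C(n,k)` with integer lower index, equal to `0` when `k < 0`. -/
noncomputable def Cb (n : ℕ) (k : ℤ) : ℝ := if 0 ≤ k then (n.choose k.toNat : ℝ) else 0

noncomputable def eta1 (ℓ m : ℕ) (ρ : ℝ) : ℝ :=
  Cb (ℓ - 1) ((m : ℤ) - 1) * Cb (ℓ - 2) ((m : ℤ) - 1) * (m : ℝ) * (1 - ρ) *
    (1 + ((ℓ : ℝ) - 1) * ρ)

noncomputable def eta2 (ℓ m : ℕ) (ρ : ℝ) : ℝ :=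
  Cb (ℓ - 1) ((m : ℤ) - 1) * (1 + ((m : ℝ) - 1) * ρ)
    + Cb (ℓ - 2) ((m : ℤ) - 1) * (m : ℝ) * (1 + ((ℓ : ℝ) - 2) * ρ)
    + Cb (ℓ - 2) ((m : ℤ) - 2) * (((ℓ : ℝ) - 1) * (m : ℝ) * ρ + ((m : ℝ) - 1) * (1 - ρ))

noncomputable def eta3 (ℓ m : ℕ) (ρ : ℝ) : ℝ :=
  Cb (ℓ - 1) ((m : ℤ) - 1) * (1 + ((m : ℝ) - 1) * ρ)
    + Cb (ℓ - 2) ((m : ℤ) - 1) * ((ℓ : ℝ) - 1) * (m : ℝ) * ρ ^ 2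
    + Cb (ℓ - 2) ((m : ℤ) - 2) * ((ℓ : ℝ) - 1) * ρ * (1 + ((m : ℝ) - 1) * ρ)

noncomputable def eta4 (ℓ m : ℕ) (ρ : ℝ) : ℝ :=
  Cb (ℓ - 1) ((m : ℤ) - 1) * ρ * (1 + ((m : ℝ) - 1) * ρ)
    + Cb (ℓ - 2) ((m : ℤ) - 1) * (m : ℝ) * ρ * (1 + ((ℓ : ℝ) - 2) * ρ)
    + Cb (ℓ - 2) ((m : ℤ) - 2) * (1 + ((ℓ : ℝ) - 2) * ρ) * (1 + ((m : ℝ) - 1) * ρ)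

/-- The value `γ^{(ℓ,m)}` solving `d⁺(γ) = d`. -/
noncomputable def gammaFun (m : ℕ) (ρ d : ℝ) (ℓ : ℕ) : ℝ :=
  (eta3 ℓ m ρ - eta2 ℓ m ρ * (1 - d) +
      Real.sqrt ((eta2 ℓ m ρ * (1 - d) - eta3 ℓ m ρ) ^ 2 + 4 * eta1 ℓ m ρ * d * (1 - d))) /
    (2 * (1 - d))

/-- `θ⁺(γ^{(ℓ,m)})`. -/
noncomputable def thetaFun (m : ℕ) (ρ d : ℝ) (ℓ : ℕ) : ℝ :=
  ρ - (eta4 ℓ m ρ * gammaFun m ρ d ℓ + eta1 ℓ m ρ * ρ) /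
    ((gammaFun m ρ d ℓ) ^ 2 + eta2 ℓ m ρ * gammaFun m ρ d ℓ + eta1 ℓ m ρ)


namespace S15

noncomputable def pw (a : ℝ) (ℓ : ℕ) : ℝ := Real.exp (a * Real.log ℓ)

lemma pw_pos (a : ℝ) (ℓ : ℕ) : 0 < pw a ℓ := Real.exp_pos _

lemma pw_add (a b : ℝ) (ℓ : ℕ) : pw (a + b) ℓ = pw a ℓ * pw b ℓ := by
  rw [pw, add_mul, Real.exp_add]; rfl

lemma pw_zero (ℓ : ℕ) : pw 0 ℓ = 1 := by simp [pw]

lemma pw_eq_rpow {ℓ : ℕ} (h : 1 ≤ ℓ) (a : ℝ) : pw a ℓ = (ℓ : ℝ) ^ a := by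
  rw [Real.rpow_def_of_pos (by exact_mod_cast h : (0:ℝ) < (ℓ:ℝ)), pw, mul_comm]

lemma pw_le_pw {a b : ℝ} (hab : a ≤ b) {ℓ : ℕ} (h : 1 ≤ ℓ) : pw a ℓ ≤ pw b ℓ := by
  have hl : (0:ℝ) ≤ Real.log ℓ := Real.log_nonneg (by exact_mod_cast h)
  exact Real.exp_le_exp.2 (by nlinarith)

lemma pw_isBigO {a b : ℝ} (hab : a ≤ b) : (pw a) =O[atTop] (pw b) := by
  refine IsBigO.of_bound 1 ?_
  filter_upwards [eventually_ge_atTop 1] with ℓ hℓ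
  rw [Real.norm_of_nonneg (pw_pos a ℓ).le, Real.norm_of_nonneg (pw_pos b ℓ).le, one_mul]
  exact pw_le_pw hab hℓ

lemma pw_tendsto_zero {a : ℝ} (ha : a < 0) : Tendsto (pw a) atTop (nhds 0) := by
  have h1 : Tendsto (fun ℓ : ℕ => Real.log ℓ) atTop atTop :=
    Real.tendsto_log_atTop.comp tendsto_natCast_atTop_atTop
  have h2 : Tendsto (fun ℓ : ℕ => a * Real.log ℓ) atTop atBot :=
    Tendsto.const_mul_atTop_of_neg ha h1
  exact Real.tendsto_exp_atBot.comp h2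

lemma bigO_congr_left {f g h : ℕ → ℝ} (hf : f =O[atTop] h) (e : ∀ ℓ, f ℓ = g ℓ) :
    g =O[atTop] h :=
  hf.congr' (Eventually.of_forall e) EventuallyEq.rfl

lemma const_mul_pw_isBigO (c : ℝ) {a b : ℝ} (hab : a ≤ b) :
    (fun ℓ => c * pw a ℓ) =O[atTop] pw b :=
  ((isBigO_refl (pw a) atTop).const_mul_left c).trans (pw_isBigO hab)

/-- Two-term asymptotic expansion with error one full power down. -/
def AE2 (f : ℕ → ℝ) (a c₀ c₁ : ℝ) : Prop :=
  (fun ℓ => f ℓ - c₀ * pw a ℓ - c₁ * pw (a - 1/2) ℓ) =O[atTop] pw (a - 1)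

/-- Three-term asymptotic expansion with error 3/2 powers down. -/
def AE3 (f : ℕ → ℝ) (a c₀ c₁ c₂ : ℝ) : Prop :=
  (fun ℓ => f ℓ - c₀ * pw a ℓ - c₁ * pw (a - 1/2) ℓ - c₂ * pw (a - 1) ℓ) =O[atTop] pw (a - 3/2)

lemma AE3.toAE2 {f a c₀ c₁ c₂} (h : AE3 f a c₀ c₁ c₂) : AE2 f a c₀ c₁ := by
  unfold AE3 at h; unfold AE2
  have h0 := h.trans (pw_isBigO (show a - 3/2 ≤ a - 1 by linarith))
  have h2 := const_mul_pw_isBigO c₂ (le_refl (a-1))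
  exact bigO_congr_left (h0.add h2) (fun ℓ => by ring)

lemma AE2.congr {f g a c₀ c₁} (h : AE2 f a c₀ c₁) (hfg : ∀ᶠ ℓ in atTop, f ℓ = g ℓ) :
    AE2 g a c₀ c₁ := by
  unfold AE2 at h ⊢
  refine h.congr' ?_ EventuallyEq.rfl
  filter_upwards [hfg] with ℓ h; rw [h]

lemma AE3.congr {f g a c₀ c₁ c₂} (h : AE3 f a c₀ c₁ c₂) (hfg : ∀ᶠ ℓ in atTop, f ℓ = g ℓ) :
    AE3 g a c₀ c₁ c₂ := by
  unfold AE3 at h ⊢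
  refine h.congr' ?_ EventuallyEq.rfl
  filter_upwards [hfg] with ℓ h; rw [h]

lemma AE2.add {f g a c₀ c₁ d₀ d₁} (hf : AE2 f a c₀ c₁) (hg : AE2 g a d₀ d₁) :
    AE2 (fun ℓ => f ℓ + g ℓ) a (c₀ + d₀) (c₁ + d₁) := by
  unfold AE2 at hf hg ⊢
  exact bigO_congr_left (IsBigO.add hf hg) (fun ℓ => by ring)

lemma AE3.add {f g a c₀ c₁ c₂ d₀ d₁ d₂} (hf : AE3 f a c₀ c₁ c₂) (hg : AE3 g a d₀ d₁ d₂) :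
    AE3 (fun ℓ => f ℓ + g ℓ) a (c₀ + d₀) (c₁ + d₁) (c₂ + d₂) := by
  unfold AE3 at hf hg ⊢
  exact bigO_congr_left (IsBigO.add hf hg) (fun ℓ => by ring)

lemma AE2.const_mul {f a c₀ c₁} (h : AE2 f a c₀ c₁) (c : ℝ) :
    AE2 (fun ℓ => c * f ℓ) a (c * c₀) (c * c₁) := by
  unfold AE2 at h ⊢
  exact bigO_congr_left (h.const_mul_left c) (fun ℓ => by ring)

lemma AE3.const_mul {f a c₀ c₁ c₂} (h : AE3 f a c₀ c₁ c₂) (c : ℝ) :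
    AE3 (fun ℓ => c * f ℓ) a (c * c₀) (c * c₁) (c * c₂) := by
  unfold AE3 at h ⊢
  exact bigO_congr_left (h.const_mul_left c) (fun ℓ => by ring)

lemma AE2.coeff_congr {f a c₀ c₁ c₀' c₁'} (h : AE2 f a c₀ c₁) (h0 : c₀ = c₀') (h1 : c₁ = c₁') :
    AE2 f a c₀' c₁' := h0 ▸ h1 ▸ h

lemma AE3.coeff_congr {f a c₀ c₁ c₂ c₀' c₁' c₂'} (h : AE3 f a c₀ c₁ c₂) (h0 : c₀ = c₀')
    (h1 : c₁ = c₁') (h2 : c₂ = c₂') : AE3 f a c₀' c₁' c₂' := h0 ▸ h1 ▸ h2 ▸ h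

/-- Raise the reference exponent by one. -/
lemma AE3.raise_one {f a c₀ c₁ c₂} (h : AE3 f a c₀ c₁ c₂) : AE3 f (a + 1) 0 0 c₀ := by
  unfold AE3 at h ⊢
  have h0 := h.trans (pw_isBigO (show a - 3/2 ≤ a + 1 - 3/2 by linarith))
  have h1 := const_mul_pw_isBigO c₁ (show a - 1/2 ≤ a + 1 - 3/2 by linarith)
  have h2 := const_mul_pw_isBigO c₂ (show a - 1 ≤ a + 1 - 3/2 by linarith)
  refine bigO_congr_left ((h0.add h1).add h2) (fun ℓ => ?_)
  ring_nf

lemma pw_split {u v : ℝ} (w : ℝ) (h : w = u + v) (ℓ : ℕ) : pw w ℓ = pw u ℓ * pw v ℓ := by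
  rw [h, pw_add]

lemma mul_pw_bigO {f g : ℕ → ℝ} {u v w : ℝ} (hf : f =O[atTop] pw u) (hg : g =O[atTop] pw v)
    (huv : u + v ≤ w) : (fun ℓ => f ℓ * g ℓ) =O[atTop] pw w :=
  (hf.mul hg).trans (bigO_congr_left (pw_isBigO huv) (fun ℓ => pw_add u v ℓ))

lemma AE2.isBigO {f a c₀ c₁} (h : AE2 f a c₀ c₁) : f =O[atTop] pw a := by
  unfold AE2 at h
  have h0 := h.trans (pw_isBigO (show a - 1 ≤ a by linarith))
  have h1 := const_mul_pw_isBigO c₀ (le_refl a)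
  have h2 := const_mul_pw_isBigO c₁ (show a - 1/2 ≤ a by linarith)
  exact bigO_congr_left ((h0.add h1).add h2) (fun ℓ => by ring)

lemma AE2.sub_main {f a c₀ c₁} (h : AE2 f a c₀ c₁) :
    (fun ℓ => f ℓ - c₀ * pw a ℓ) =O[atTop] pw (a - 1/2) := by
  unfold AE2 at h
  have h0 := h.trans (pw_isBigO (show a - 1 ≤ a - 1/2 by linarith))
  have h1 := const_mul_pw_isBigO c₁ (le_refl (a - 1/2))
  exact bigO_congr_left (h0.add h1) (fun ℓ => by ring)

lemma AE2.mul {f g a b c₀ c₁ d₀ d₁} (hf : AE2 f a c₀ c₁) (hg : AE2 g b d₀ d₁) :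
    AE2 (fun ℓ => f ℓ * g ℓ) (a + b) (c₀ * d₀) (c₀ * d₁ + c₁ * d₀) := by
  have T1 : (fun ℓ => (f ℓ - c₀ * pw a ℓ - c₁ * pw (a - 1/2) ℓ) * g ℓ) =O[atTop]
      pw (a + b - 1) := mul_pw_bigO hf hg.isBigO (by linarith)
  have T2 : (fun ℓ => (c₀ * pw a ℓ) * (g ℓ - d₀ * pw b ℓ - d₁ * pw (b - 1/2) ℓ)) =O[atTop]
      pw (a + b - 1) := mul_pw_bigO (const_mul_pw_isBigO c₀ (le_refl a)) hg (by linarith)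
  have T3 : (fun ℓ => (c₁ * pw (a - 1/2) ℓ) * (g ℓ - d₀ * pw b ℓ)) =O[atTop]
      pw (a + b - 1) :=
    mul_pw_bigO (const_mul_pw_isBigO c₁ (le_refl (a - 1/2))) hg.sub_main (by linarith)
  unfold AE2
  refine bigO_congr_left ((T1.add T2).add T3) (fun ℓ => ?_)
  have e1 := pw_split (u := a) (v := b) (a + b) (by ring) ℓ
  have e2 := pw_split (u := a) (v := b - 1/2) (a + b - 1/2) (by ring) ℓ
  have e3 := pw_split (u := a - 1/2) (v := b) (a + b - 1/2) (by ring) ℓ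
  linear_combination (c₀ * d₀) * e1 + (c₀ * d₁) * e2 + (c₁ * d₀) * e3

lemma AE3.sub_main2 {f a c₀ c₁ c₂} (h : AE3 f a c₀ c₁ c₂) :
    (fun ℓ => f ℓ - c₀ * pw a ℓ - c₁ * pw (a - 1/2) ℓ) =O[atTop] pw (a - 1) := AE3.toAE2 h

lemma AE3.mul {f g a b c₀ c₁ c₂ d₀ d₁ d₂} (hf : AE3 f a c₀ c₁ c₂) (hg : AE3 g b d₀ d₁ d₂) :
    AE3 (fun ℓ => f ℓ * g ℓ) (a + b) (c₀ * d₀) (c₀ * d₁ + c₁ * d₀)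
      (c₀ * d₂ + c₁ * d₁ + c₂ * d₀) := by
  have T1 : (fun ℓ => (f ℓ - c₀ * pw a ℓ - c₁ * pw (a - 1/2) ℓ - c₂ * pw (a-1) ℓ) * g ℓ)
      =O[atTop] pw (a + b - 3/2) := mul_pw_bigO hf hg.toAE2.isBigO (by linarith)
  have T2 : (fun ℓ => (c₀ * pw a ℓ) *
      (g ℓ - d₀ * pw b ℓ - d₁ * pw (b - 1/2) ℓ - d₂ * pw (b-1) ℓ)) =O[atTop]
      pw (a + b - 3/2) := mul_pw_bigO (const_mul_pw_isBigO c₀ (le_refl a)) hg (by linarith)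
  have T3 : (fun ℓ => (c₁ * pw (a - 1/2) ℓ) * (g ℓ - d₀ * pw b ℓ - d₁ * pw (b - 1/2) ℓ))
      =O[atTop] pw (a + b - 3/2) :=
    mul_pw_bigO (const_mul_pw_isBigO c₁ (le_refl (a - 1/2))) hg.sub_main2 (by linarith)
  have T4 : (fun ℓ => (c₂ * pw (a - 1) ℓ) * (g ℓ - d₀ * pw b ℓ)) =O[atTop]
      pw (a + b - 3/2) :=
    mul_pw_bigO (const_mul_pw_isBigO c₂ (le_refl (a - 1))) hg.toAE2.sub_main (by linarith)
  unfold AE3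
  refine bigO_congr_left (((T1.add T2).add T3).add T4) (fun ℓ => ?_)
  have e1 : pw (a + b) ℓ = pw a ℓ * pw b ℓ := pw_split _ (by ring) ℓ
  have e2 : pw (a + b - 1/2) ℓ = pw a ℓ * (pw b ℓ * pw (-(1/2) : ℝ) ℓ) := by
    rw [← pw_add, ← pw_add]; ring_nf
  have e3 : pw (a + b - 1) ℓ = pw a ℓ * (pw b ℓ * (pw (-(1/2) : ℝ) ℓ * pw (-(1/2) : ℝ) ℓ)) := by
    rw [← pw_add, ← pw_add, ← pw_add]; ring_nf
  have e4 : pw (a - 1/2) ℓ = pw a ℓ * pw (-(1/2) : ℝ) ℓ := by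
    rw [← pw_add]; ring_nf
  have e5 : pw (b - 1/2) ℓ = pw b ℓ * pw (-(1/2) : ℝ) ℓ := by
    rw [← pw_add]; ring_nf
  have e6 : pw (a - 1) ℓ = pw a ℓ * (pw (-(1/2) : ℝ) ℓ * pw (-(1/2) : ℝ) ℓ) := by
    rw [← pw_add, ← pw_add]; ring_nf
  have e7 : pw (b - 1) ℓ = pw b ℓ * (pw (-(1/2) : ℝ) ℓ * pw (-(1/2) : ℝ) ℓ) := by
    rw [← pw_add, ← pw_add]; ring_nf
  rw [e1, e2, e3, e4, e5, e6, e7]; ring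

lemma AE2.lower {f a c₀ c₁} (h : AE2 f a c₀ c₁) (hc : 0 < c₀) :
    ∀ᶠ ℓ in atTop, c₀ / 2 * pw a ℓ ≤ f ℓ := by
  unfold AE2 at h
  rw [isBigO_iff] at h
  obtain ⟨C, hC⟩ := h
  have e1 : ∀ᶠ ℓ in atTop, pw (-(1/2)) ℓ < c₀ / (4 * (|c₁| + 1)) :=
    (pw_tendsto_zero (by norm_num)).eventually (gt_mem_nhds (by positivity))
  have e2 : ∀ᶠ ℓ in atTop, pw (-1) ℓ < c₀ / (4 * (|C| + 1)) :=
    (pw_tendsto_zero (by norm_num)).eventually (gt_mem_nhds (by positivity))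
  filter_upwards [hC, e1, e2] with ℓ h1 h2 h3
  rw [Real.norm_eq_abs, Real.norm_of_nonneg (pw_pos _ _).le] at h1
  have hr := abs_le.1 h1
  have q1 : pw (a - 1/2) ℓ = pw a ℓ * pw (-(1/2)) ℓ := pw_split _ (by ring) ℓ
  have q2 : pw (a - 1) ℓ = pw a ℓ * pw (-1) ℓ := pw_split _ (by ring) ℓ
  have hpa : 0 < pw a ℓ := pw_pos _ _
  have hc1 : c₁ * pw (a - 1/2) ℓ ≥ -(|c₁| * pw (a - 1/2) ℓ) := by
    have := neg_abs_le c₁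
    nlinarith [pw_pos (a - 1/2) ℓ]
  have hCb : C * pw (a-1) ℓ ≤ |C| * pw (a-1) ℓ := by
    nlinarith [le_abs_self C, pw_pos (a-1) ℓ]
  have key : ∀ c M : ℝ, 0 ≤ c → 0 ≤ M → M < c₀ / (4 * (c + 1)) → c * M ≤ c₀ / 4 := by
    intro c M hc0 hM hMe
    have h4 : (0:ℝ) < 4 * (c + 1) := by linarith
    rw [lt_div_iff₀ h4] at hMe
    nlinarith
  have k1 := key |c₁| (pw (-(1/2)) ℓ) (abs_nonneg c₁) (pw_pos _ _).le h2
  have k2 := key |C| (pw (-1) ℓ) (abs_nonneg C) (pw_pos _ _).le h3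
  have b1 : |c₁| * pw (a - 1/2) ℓ ≤ c₀ / 4 * pw a ℓ := by
    rw [q1]; nlinarith [pw_pos (-(1/2) : ℝ) ℓ, abs_nonneg c₁]
  have b2 : |C| * pw (a - 1) ℓ ≤ c₀ / 4 * pw a ℓ := by
    rw [q2]; nlinarith [pw_pos (-1 : ℝ) ℓ, abs_nonneg C]
  linarith [hr.1, hc1, hCb, b1, b2]

lemma AE2.zero_error {f : ℕ → ℝ} {a c₀ c₁ : ℝ}
    (h : ∀ ℓ, f ℓ = c₀ * pw a ℓ + c₁ * pw (a - 1/2) ℓ) : AE2 f a c₀ c₁ := by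
  unfold AE2
  have h0 : (fun _ : ℕ => (0:ℝ)) =O[atTop] pw (a - 1) := isBigO_zero _ _
  exact bigO_congr_left h0 (fun ℓ => by rw [h ℓ]; ring)

lemma pw_inv_cancel (a : ℝ) (ℓ : ℕ) : pw (-a) ℓ * pw a ℓ = 1 := by
  rw [← pw_add]; ring_nf; exact pw_zero ℓ

lemma AE2.sqrt {f a c₀ c₁} (h : AE2 f a c₀ c₁) (hc : 0 < c₀) :
    AE2 (fun ℓ => Real.sqrt (f ℓ)) (a/2) (Real.sqrt c₀) (c₁ / (2 * Real.sqrt c₀)) := by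
  set s := Real.sqrt c₀ with hs_def
  have hs : 0 < s := Real.sqrt_pos.2 hc
  have hs2 : s ^ 2 = c₀ := Real.sq_sqrt hc.le
  set u : ℕ → ℝ := fun ℓ => s * pw (a/2) ℓ + (c₁ / (2*s)) * pw (a/2 - 1/2) ℓ with hu_def
  have hu : AE2 u (a/2) s (c₁ / (2*s)) := AE2.zero_error (fun ℓ => rfl)
  have step1 : (fun ℓ => f ℓ - (u ℓ)^2) =O[atTop] pw (a - 1) := by
    have h2 := const_mul_pw_isBigO (-(c₁^2/(4*c₀))) (le_refl (a-1))
    refine bigO_congr_left (IsBigO.add h h2) (fun ℓ => ?_)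
    have e1 : pw a ℓ = pw (a/2) ℓ * pw (a/2) ℓ := pw_split _ (by ring) ℓ
    have e2 : pw (a - 1/2) ℓ = pw (a/2) ℓ * pw (a/2 - 1/2) ℓ := pw_split _ (by ring) ℓ
    have e3 : pw (a - 1) ℓ = pw (a/2 - 1/2) ℓ * pw (a/2 - 1/2) ℓ := pw_split _ (by ring) ℓ
    simp only [hu_def]
    rw [e1, e2, e3, ← hs2]
    field_simp
    ring
  have low_f := h.lower hc
  have low_u := hu.lower hs
  have step3 : (fun ℓ => Real.sqrt (f ℓ) - u ℓ) =O[atTop]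
      (fun ℓ => pw (-(a/2)) ℓ * (f ℓ - (u ℓ)^2)) := by
    refine IsBigO.of_bound (2/s) ?_
    filter_upwards [low_f, low_u] with ℓ hf hu'
    have hpa2 := pw_pos (a/2) ℓ
    have hf0 : 0 ≤ f ℓ := le_trans (mul_nonneg (by linarith) (pw_pos a ℓ).le) hf
    have hsq : Real.sqrt (f ℓ) ^ 2 = f ℓ := Real.sq_sqrt hf0
    have hsqrt_nn : 0 ≤ Real.sqrt (f ℓ) := Real.sqrt_nonneg _
    have hu0 : 0 < u ℓ := lt_of_lt_of_le (mul_pos (by linarith) (pw_pos (a/2) ℓ)) hu'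
    have hsum : 0 < Real.sqrt (f ℓ) + u ℓ := by linarith
    have habs : |Real.sqrt (f ℓ) - u ℓ| * (Real.sqrt (f ℓ) + u ℓ) = |f ℓ - (u ℓ)^2| := by
      rw [show f ℓ - (u ℓ)^2 = (Real.sqrt (f ℓ) - u ℓ) * (Real.sqrt (f ℓ) + u ℓ) by
        nlinarith [hsq], abs_mul, abs_of_pos hsum]
    rw [Real.norm_eq_abs, Real.norm_eq_abs, abs_mul,
      abs_of_pos (pw_pos (-(a/2)) ℓ)]
    have hinv : pw (a/2) ℓ * pw (-(a/2)) ℓ = 1 := by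
      rw [mul_comm]; exact pw_inv_cancel (a/2) ℓ
    have hone : (s/2) * pw (a/2) ℓ * ((2/s) * pw (-(a/2)) ℓ) = 1 := by
      rw [show (s/2) * pw (a/2) ℓ * ((2/s) * pw (-(a/2)) ℓ)
        = (pw (a/2) ℓ * pw (-(a/2)) ℓ) * ((s/2) * (2/s)) by ring, hinv]
      field_simp
    have hb : |Real.sqrt (f ℓ) - u ℓ| * ((s/2) * pw (a/2) ℓ) ≤ |f ℓ - (u ℓ)^2| := by
      rw [← habs]
      have h1 := abs_nonneg (Real.sqrt (f ℓ) - u ℓ)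
      nlinarith [hu']
    have step := mul_le_mul_of_nonneg_right hb
      (show (0:ℝ) ≤ 2/s * pw (-(a/2)) ℓ from mul_nonneg (by positivity) (pw_pos _ _).le)
    calc |Real.sqrt (f ℓ) - u ℓ|
        = |Real.sqrt (f ℓ) - u ℓ| * ((s/2) * pw (a/2) ℓ * ((2/s) * pw (-(a/2)) ℓ)) := by
          rw [hone, mul_one]
      _ = |Real.sqrt (f ℓ) - u ℓ| * ((s/2) * pw (a/2) ℓ) * ((2/s) * pw (-(a/2)) ℓ) := by
          ring
      _ ≤ |f ℓ - (u ℓ)^2| * ((2/s) * pw (-(a/2)) ℓ) := step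
      _ = 2/s * (pw (-(a/2)) ℓ * |f ℓ - (u ℓ)^2|) := by ring
  have step4 : (fun ℓ => pw (-(a/2)) ℓ * (f ℓ - (u ℓ)^2)) =O[atTop] pw (a/2 - 1) :=
    mul_pw_bigO (pw_isBigO (le_refl _)) step1 (by linarith)
  unfold AE2
  exact bigO_congr_left (step3.trans step4) (fun ℓ => by simp only [hu_def]; ring)

lemma AE2.inv {f a c₀ c₁} (h : AE2 f a c₀ c₁) (hc : 0 < c₀) :
    AE2 (fun ℓ => (f ℓ)⁻¹) (-a) c₀⁻¹ (-(c₁ / c₀^2)) := by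
  set T : ℕ → ℝ := fun ℓ => c₀⁻¹ * pw (-a) ℓ + (-(c₁ / c₀^2)) * pw (-a - 1/2) ℓ with hT_def
  have hT : AE2 T (-a) c₀⁻¹ (-(c₁ / c₀^2)) := AE2.zero_error (fun ℓ => rfl)
  have step1 : (fun ℓ => 1 - T ℓ * f ℓ) =O[atTop] pw (-(1:ℝ)) := by
    have h2 := const_mul_pw_isBigO (c₁^2/c₀^2) (le_refl (-(1:ℝ)))
    have h3 : (fun ℓ => T ℓ * (f ℓ - c₀ * pw a ℓ - c₁ * pw (a - 1/2) ℓ)) =O[atTop]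
        pw (-(1:ℝ)) := mul_pw_bigO hT.isBigO h (by linarith)
    refine bigO_congr_left (IsBigO.sub h2 h3) (fun ℓ => ?_)
    have hA := pw_pos a ℓ
    have hIA : pw (-a) ℓ * pw a ℓ = 1 := pw_inv_cancel a ℓ
    have hI : pw (-a) ℓ = (pw a ℓ)⁻¹ := eq_inv_of_mul_eq_one_left hIA
    have e1 : pw (a - 1/2) ℓ = pw a ℓ * pw (-(1/2) : ℝ) ℓ :=
      pw_split _ (by ring) ℓ
    have e2 : pw (-a - 1/2) ℓ = pw (-a) ℓ * pw (-(1/2) : ℝ) ℓ :=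
      pw_split _ (by ring) ℓ
    have e3 : pw (-(1:ℝ)) ℓ = pw (-(1/2) : ℝ) ℓ * pw (-(1/2) : ℝ) ℓ :=
      pw_split _ (by ring) ℓ
    simp only [hT_def]
    rw [e1, e2, e3, hI]
    field_simp
    ring
  have low_f := h.lower hc
  have step3 : (fun ℓ => (f ℓ)⁻¹ - T ℓ) =O[atTop]
      (fun ℓ => pw (-a) ℓ * (1 - T ℓ * f ℓ)) := by
    refine IsBigO.of_bound (2/c₀) ?_
    filter_upwards [low_f] with ℓ hf
    have hpa := pw_pos a ℓ
    have hf0 : 0 < f ℓ := lt_of_lt_of_le (mul_pos (by linarith) (pw_pos a ℓ)) hf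
    have hIA : pw (-a) ℓ * pw a ℓ = 1 := pw_inv_cancel a ℓ
    rw [Real.norm_eq_abs, Real.norm_eq_abs, abs_mul, abs_of_pos (pw_pos (-a) ℓ)]
    have key : (f ℓ)⁻¹ - T ℓ = (f ℓ)⁻¹ * (1 - T ℓ * f ℓ) := by
      field_simp
    rw [key, abs_mul, abs_of_pos (inv_pos.2 hf0)]
    have hfi : (f ℓ)⁻¹ ≤ 2/c₀ * pw (-a) ℓ := by
      rw [inv_le_iff_one_le_mul₀ hf0]
      have h1 : 2/c₀ * pw (-a) ℓ * ((c₀/2) * pw a ℓ) = 1 := by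
        rw [show 2/c₀ * pw (-a) ℓ * ((c₀/2) * pw a ℓ)
          = (pw (-a) ℓ * pw a ℓ) * (2/c₀ * (c₀/2)) by ring, hIA]
        field_simp
      calc (1:ℝ) = 2/c₀ * pw (-a) ℓ * ((c₀/2) * pw a ℓ) := h1.symm
        _ ≤ 2/c₀ * pw (-a) ℓ * f ℓ := by
            exact mul_le_mul_of_nonneg_left hf
              (mul_nonneg (by positivity) (pw_pos (-a) ℓ).le)
    exact mul_le_mul_of_nonneg_right hfi (abs_nonneg _) |>.trans_eq (by ring)
  have step4 : (fun ℓ => pw (-a) ℓ * (1 - T ℓ * f ℓ)) =O[atTop] pw (-a - 1) :=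
    mul_pw_bigO (pw_isBigO (le_refl _)) step1 (by linarith)
  unfold AE2
  exact bigO_congr_left (step3.trans step4) (fun ℓ => by simp only [hT_def]; ring)

lemma pw_one_eq {ℓ : ℕ} (h : 1 ≤ ℓ) : pw 1 ℓ = (ℓ:ℝ) := by
  rw [pw_eq_rpow h, Real.rpow_one]

lemma pw_nat (k : ℕ) {ℓ : ℕ} (h : 1 ≤ ℓ) : pw (k:ℝ) ℓ = (ℓ:ℝ)^k := by
  rw [pw_eq_rpow h, Real.rpow_natCast]

lemma pw_nat_sub_one (k : ℕ) {ℓ : ℕ} (h : 1 ≤ ℓ) : pw ((k:ℝ) - 1) ℓ = (ℓ:ℝ)^k / (ℓ:ℝ) := by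
  have hx : (0:ℝ) < (ℓ:ℝ) := by exact_mod_cast h
  rw [pw_split (u := (k:ℝ)) (v := (-1:ℝ)) _ (by ring) ℓ, pw_nat k h, pw_eq_rpow h,
    Real.rpow_neg_one]
  field_simp

lemma pw_nat_sub_two (k : ℕ) {ℓ : ℕ} (h : 1 ≤ ℓ) : pw ((k:ℝ) - 2) ℓ = (ℓ:ℝ)^k / (ℓ:ℝ)^2 := by
  have hx : (0:ℝ) < (ℓ:ℝ) := by exact_mod_cast h
  rw [pw_split (u := (k:ℝ)) (v := (-2:ℝ)) _ (by ring) ℓ, pw_nat k h, pw_eq_rpow h]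
  rw [show (-2:ℝ) = -((2:ℕ):ℝ) by norm_num, Real.rpow_neg hx.le, Real.rpow_natCast]
  field_simp

lemma prodExpand (c : ℝ) (k : ℕ) : ∃ C : ℝ, 0 ≤ C ∧ ∀ x : ℝ, 1 ≤ x →
    |(∏ i ∈ Finset.range k, (x - (c + i))) - x^k
      + ((k:ℝ)*c + (k:ℝ)*((k:ℝ)-1)/2) * (x^k/x)| ≤ C * (x^k/x^2) := by
  induction k with
  | zero =>
    refine ⟨0, le_refl 0, fun x hx => ?_⟩
    simp
  | succ k ih =>
    obtain ⟨C, hC0, hC⟩ := ih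
    set s : ℝ := (k:ℝ)*c + (k:ℝ)*((k:ℝ)-1)/2 with hs_def
    refine ⟨|s*(c+k)| + C*(1 + |c + (k:ℝ)|), by positivity, fun x hx => ?_⟩
    have hx0 : (0:ℝ) < x := by linarith
    have hxne : x ≠ 0 := hx0.ne'
    have hC' := hC x hx
    set P : ℝ := ∏ i ∈ Finset.range k, (x - (c + i)) with hP_def
    set E : ℝ := P - x^k + s * (x^k/x) with hE_def
    have hP : P = x^k - s * (x^k/x) + E := by rw [hE_def]; ring
    have hprod : ∏ i ∈ Finset.range (k+1), (x - (c + i)) = P * (x - (c + (k:ℝ))) := by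
      rw [hP_def, Finset.prod_range_succ]
    have hs' : ((k+1:ℕ):ℝ)*c + ((k+1:ℕ):ℝ)*(((k+1:ℕ):ℝ)-1)/2 = s + (c + k) := by
      push_cast; rw [hs_def]; ring
    have key : ∏ i ∈ Finset.range (k+1), (x - (c + i)) - x^(k+1)
        + (((k+1:ℕ):ℝ)*c + ((k+1:ℕ):ℝ)*(((k+1:ℕ):ℝ)-1)/2) * (x^(k+1)/x)
        = s*(c+(k:ℝ)) * (x^k/x) + E * (x - (c+(k:ℝ))) := by
      rw [hprod, hs', hP]
      field_simp
      ring
    rw [key]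
    have b0 : x^k/x = x^(k+1)/x^2 := by field_simp; ring
    have b1 : |s*(c+(k:ℝ)) * (x^k/x)| ≤ |s*(c+k)| * (x^(k+1)/x^2) := by
      rw [abs_mul, ← b0]
      have : |x^k/x| = x^k/x := abs_of_nonneg (by positivity)
      rw [this]
    have hE1 : |E| ≤ C * (x^k/x^2) := hC'
    have b2 : |E * (x - (c+(k:ℝ)))| ≤ C * (1 + |c + (k:ℝ)|) * (x^(k+1)/x^2) := by
      rw [abs_mul]
      have hxk : x^k ≤ x^(k+1) := pow_le_pow_right₀ hx (Nat.le_succ k)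
      have h3 : |x - (c+(k:ℝ))| ≤ x + |c + (k:ℝ)| := by
        calc |x - (c+(k:ℝ))| ≤ |x| + |c + (k:ℝ)| := abs_sub _ _
          _ = x + |c + (k:ℝ)| := by rw [abs_of_pos hx0]
      have hE0 : (0:ℝ) ≤ |E| := abs_nonneg E
      have habs0 : (0:ℝ) ≤ |c + (k:ℝ)| := abs_nonneg _
      have hdiv : x^k/x^2 ≤ x^(k+1)/x^2 :=
        (div_le_div_iff_of_pos_right (by positivity)).mpr hxk
      have m1 : |E| * |x - (c+(k:ℝ))| ≤ |E| * (x + |c + (k:ℝ)|) :=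
        mul_le_mul_of_nonneg_left h3 hE0
      have m2 : |E| * x ≤ C*(x^k/x^2)*x := mul_le_mul_of_nonneg_right hE1 (by linarith)
      have m3 : |E| * |c + (k:ℝ)| ≤ C*(x^k/x^2)*|c + (k:ℝ)| :=
        mul_le_mul_of_nonneg_right hE1 habs0
      have m4 : C*(x^k/x^2) ≤ C*(x^(k+1)/x^2) := mul_le_mul_of_nonneg_left hdiv hC0
      have m5 : C*(x^k/x^2)*|c + (k:ℝ)| ≤ C*(x^(k+1)/x^2)*|c + (k:ℝ)| :=
        mul_le_mul_of_nonneg_right m4 habs0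
      have emulC : C*(x^k/x^2)*x = C*(x^(k+1)/x^2) := by field_simp; ring
      nlinarith [m1, m2, m3, m5]
    calc |s*(c+(k:ℝ)) * (x^k/x) + E * (x - (c+(k:ℝ)))|
        ≤ |s*(c+(k:ℝ)) * (x^k/x)| + |E * (x - (c+(k:ℝ)))| := abs_add_le _ _
      _ ≤ |s*(c+k)| * (x^(k+1)/x^2) + C * (1 + |c + (k:ℝ)|) * (x^(k+1)/x^2) := by
          linarith [b1, b2]
      _ = (|s*(c+k)| + C*(1 + |c + (k:ℝ)|)) * (x^(k+1)/x^2) := by ring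

lemma AE3_zero (a : ℝ) : AE3 (fun _ => 0) a 0 0 0 := by
  unfold AE3
  exact bigO_congr_left (isBigO_zero _ _) (fun ℓ => by ring)

lemma AE3.expcongr {f a c₀ c₁ c₂ a'} (h : AE3 f a c₀ c₁ c₂) (ha : a = a') :
    AE3 f a' c₀ c₁ c₂ := ha ▸ h

lemma AE2.expcongr {f a c₀ c₁ a'} (h : AE2 f a c₀ c₁) (ha : a = a') :
    AE2 f a' c₀ c₁ := ha ▸ h

lemma AE3.of_prod {f : ℕ → ℝ} {K c : ℝ} (hK : 0 < K) (k : ℕ)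
    (hf : ∀ᶠ ℓ in atTop, K * f ℓ = ∏ i ∈ Finset.range k, ((ℓ:ℝ) - (c + i))) :
    AE3 f (k:ℝ) (1/K) 0 (-((k:ℝ)*c + (k:ℝ)*((k:ℝ)-1)/2)/K) := by
  obtain ⟨C, hC0, hC⟩ := prodExpand c k
  unfold AE3
  refine IsBigO.trans (IsBigO.of_bound (C/K) ?_)
    (pw_isBigO (show (k:ℝ) - 2 ≤ (k:ℝ) - 3/2 by linarith))
  filter_upwards [hf, eventually_ge_atTop 1] with ℓ hfℓ h1
  have hx : (1:ℝ) ≤ (ℓ:ℝ) := by exact_mod_cast h1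
  have hx0 : (0:ℝ) < (ℓ:ℝ) := by linarith
  have hCx := hC (ℓ:ℝ) hx
  have hfe : f ℓ = (∏ i ∈ Finset.range k, ((ℓ:ℝ) - (c + i))) / K := by
    field_simp
    linarith [hfℓ]
  rw [Real.norm_eq_abs, Real.norm_eq_abs, pw_nat k h1, pw_nat_sub_one k h1,
    pw_nat_sub_two k h1]
  have expr_eq : f ℓ - 1/K * (ℓ:ℝ)^k - 0 * pw ((k:ℝ) - 1/2) ℓ
      - (-((k:ℝ)*c + (k:ℝ)*((k:ℝ)-1)/2)/K) * ((ℓ:ℝ)^k / (ℓ:ℝ))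
      = ((∏ i ∈ Finset.range k, ((ℓ:ℝ) - (c + i))) - (ℓ:ℝ)^k
        + ((k:ℝ)*c + (k:ℝ)*((k:ℝ)-1)/2) * ((ℓ:ℝ)^k/(ℓ:ℝ))) / K := by
    rw [hfe]; field_simp; ring
  rw [expr_eq, abs_div, abs_of_pos hK,
    abs_of_pos (show (0:ℝ) < (ℓ:ℝ)^k/(ℓ:ℝ)^2 by positivity), div_le_iff₀ hK]
  have hid : C/K*((ℓ:ℝ)^k/(ℓ:ℝ)^2)*K = C*((ℓ:ℝ)^k/(ℓ:ℝ)^2) := by field_simp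
  linarith [hCx]


lemma choose_prod (k j : ℕ) : ∀ᶠ ℓ : ℕ in atTop, (k.factorial : ℝ) * ((ℓ - j).choose k : ℝ)
    = ∏ i ∈ Finset.range k, ((ℓ:ℝ) - ((j:ℝ) + (i:ℝ))) := by
  filter_upwards [eventually_ge_atTop (j + k)] with ℓ hℓ
  have h1 : k.factorial * (ℓ - j).choose k = (ℓ - j).descFactorial k :=
    (Nat.descFactorial_eq_factorial_mul_choose _ _).symm
  calc (k.factorial : ℝ) * ((ℓ - j).choose k : ℝ)
      = ((k.factorial * (ℓ - j).choose k : ℕ) : ℝ) := by push_cast; ring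
    _ = (((ℓ - j).descFactorial k : ℕ) : ℝ) := by rw [h1]
    _ = ((∏ i ∈ Finset.range k, (ℓ - j - i) : ℕ) : ℝ) := by
        rw [Nat.descFactorial_eq_prod_range]
    _ = ∏ i ∈ Finset.range k, ((ℓ - j - i : ℕ) : ℝ) := by rw [Nat.cast_prod]
    _ = ∏ i ∈ Finset.range k, ((ℓ:ℝ) - ((j:ℝ) + (i:ℝ))) := by
        refine Finset.prod_congr rfl (fun i hi => ?_)
        have hik : i < k := Finset.mem_range.1 hi
        have h2 : i ≤ ℓ - j := by omega
        have h3 : j ≤ ℓ := by omega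
        rw [Nat.cast_sub h2, Nat.cast_sub h3]
        ring

lemma AE3_A (m : ℕ) (hm : 1 ≤ m) : AE3 (fun ℓ : ℕ => Cb (ℓ - 1) ((m:ℤ) - 1)) ((m:ℝ) - 1)
    (1/((m-1).factorial : ℝ)) 0 (-((m:ℝ)*((m:ℝ)-1)/2)/((m-1).factorial : ℝ)) := by
  have hK : (0:ℝ) < ((m-1).factorial : ℝ) := by exact_mod_cast (m-1).factorial_pos
  have hCb : ∀ ℓ : ℕ, Cb (ℓ - 1) ((m:ℤ) - 1) = (((ℓ-1).choose (m-1) : ℕ) : ℝ) := by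
    intro ℓ
    rw [Cb, if_pos (by omega : (0:ℤ) ≤ (m:ℤ)-1)]
    congr 2
    omega
  have hev : ∀ᶠ ℓ : ℕ in atTop, ((m-1).factorial : ℝ) * Cb (ℓ - 1) ((m:ℤ) - 1)
      = ∏ i ∈ Finset.range (m-1), ((ℓ:ℝ) - (1 + (i:ℝ))) := by
    filter_upwards [choose_prod (m-1) 1] with ℓ h
    rw [hCb ℓ, h]
    norm_num
  have h := AE3.of_prod hK (m-1) hev
  have hc : ((m-1:ℕ):ℝ) = (m:ℝ) - 1 := by
    rw [Nat.cast_sub hm]; norm_num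
  refine (h.expcongr hc).coeff_congr rfl rfl ?_
  rw [hc]; ring

lemma AE3_B (m : ℕ) (hm : 1 ≤ m) : AE3 (fun ℓ : ℕ => Cb (ℓ - 2) ((m:ℤ) - 1)) ((m:ℝ) - 1)
    (1/((m-1).factorial : ℝ)) 0 (-(((m:ℝ)-1)*((m:ℝ)+2)/2)/((m-1).factorial : ℝ)) := by
  have hK : (0:ℝ) < ((m-1).factorial : ℝ) := by exact_mod_cast (m-1).factorial_pos
  have hCb : ∀ ℓ : ℕ, Cb (ℓ - 2) ((m:ℤ) - 1) = (((ℓ-2).choose (m-1) : ℕ) : ℝ) := by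
    intro ℓ
    rw [Cb, if_pos (by omega : (0:ℤ) ≤ (m:ℤ)-1)]
    congr 2
    omega
  have hev : ∀ᶠ ℓ : ℕ in atTop, ((m-1).factorial : ℝ) * Cb (ℓ - 2) ((m:ℤ) - 1)
      = ∏ i ∈ Finset.range (m-1), ((ℓ:ℝ) - (2 + (i:ℝ))) := by
    filter_upwards [choose_prod (m-1) 2] with ℓ h
    rw [hCb ℓ, h]
    norm_num
  have h := AE3.of_prod hK (m-1) hev
  have hc : ((m-1:ℕ):ℝ) = (m:ℝ) - 1 := by
    rw [Nat.cast_sub hm]; norm_num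
  refine (h.expcongr hc).coeff_congr rfl rfl ?_
  rw [hc]; ring

lemma AE3_D (m : ℕ) (hm : 1 ≤ m) : AE3 (fun ℓ : ℕ => Cb (ℓ - 2) ((m:ℤ) - 2)) ((m:ℝ) - 2)
    (((m:ℝ)-1)/((m-1).factorial : ℝ)) 0
    (-(((m:ℝ)-1)*(((m:ℝ)-2)*2 + ((m:ℝ)-2)*((m:ℝ)-3)/2))/((m-1).factorial : ℝ)) := by
  rcases Nat.lt_or_ge m 2 with hm2 | hm2
  · -- m = 1
    have hm1 : m = 1 := by omega
    subst hm1
    have hz : ∀ ℓ : ℕ, (0:ℝ) = Cb (ℓ - 2) (((1:ℕ):ℤ) - 2) := fun ℓ => by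
      rw [Cb, if_neg (by norm_num)]
    refine ((AE3_zero (((1:ℕ):ℝ) - 2)).coeff_congr ?_ rfl ?_).congr
      (Eventually.of_forall hz) <;> norm_num
  · have hK : (0:ℝ) < ((m-1).factorial : ℝ) := by exact_mod_cast (m-1).factorial_pos
    have hK2 : (0:ℝ) < ((m-2).factorial : ℝ) := by exact_mod_cast (m-2).factorial_pos
    have hfac : ((m-1).factorial : ℝ) = ((m:ℝ)-1) * ((m-2).factorial : ℝ) := by
      have h1 : m - 1 = (m-2) + 1 := by omega
      rw [h1, Nat.factorial_succ]
      push_cast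
      have h2 : ((m-2:ℕ):ℝ) = (m:ℝ) - 2 := by rw [Nat.cast_sub hm2]; norm_num
      rw [h2]; ring
    have hCb : ∀ ℓ : ℕ, Cb (ℓ - 2) ((m:ℤ) - 2) = (((ℓ-2).choose (m-2) : ℕ) : ℝ) := by
      intro ℓ
      rw [Cb, if_pos (by omega : (0:ℤ) ≤ (m:ℤ)-2)]
      congr 2
      omega
    have hev : ∀ᶠ ℓ : ℕ in atTop, ((m-2).factorial : ℝ) * Cb (ℓ - 2) ((m:ℤ) - 2)
        = ∏ i ∈ Finset.range (m-2), ((ℓ:ℝ) - (2 + (i:ℝ))) := by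
      filter_upwards [choose_prod (m-2) 2] with ℓ h
      rw [hCb ℓ, h]
      norm_num
    have h := AE3.of_prod hK2 (m-2) hev
    have hc : ((m-2:ℕ):ℝ) = (m:ℝ) - 2 := by rw [Nat.cast_sub hm2]; norm_num
    have hm1 : (0:ℝ) < (m:ℝ) - 1 := by
      have : (2:ℝ) ≤ (m:ℝ) := by exact_mod_cast hm2
      linarith
    refine (h.expcongr hc).coeff_congr ?_ rfl ?_
    · rw [hfac]; field_simp
    · rw [hc, hfac]; field_simp; ring

lemma AE3_lin (p q : ℝ) : AE3 (fun ℓ : ℕ => p * (ℓ:ℝ) + q) 1 p 0 q := by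
  unfold AE3
  refine IsBigO.of_bound 0 ?_
  filter_upwards [eventually_ge_atTop 1] with ℓ h1
  rw [pw_one_eq h1, show ((1:ℝ)-1) = 0 by norm_num, pw_zero]
  simp

lemma AE2.add_shifted {g h : ℕ → ℝ} {a d₀ d₁ c : ℝ} (hg : AE2 g a d₀ d₁)
    (hh : (fun ℓ => h ℓ - c * pw (a - 1/2) ℓ) =O[atTop] pw (a - 1)) :
    AE2 (fun ℓ => g ℓ + h ℓ) a d₀ (d₁ + c) := by
  unfold AE2 at hg ⊢
  exact bigO_congr_left (IsBigO.add hg hh) (fun ℓ => by ring)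

end S15

set_option maxHeartbeats 1600000 in
/-- at the critical distortion `d = 1-ρ`, as `ℓ → ∞`,
(i) `γ(ℓ) = √m(1-ρ)ℓ^{m-1/2}/(m-1)! + ((1-ρ)(1+(m-2)ρ)/(2ρ))ℓ^{m-1}/(m-1)! + O(ℓ^{m-3/2})`
and (ii) `θ(ℓ) = (1-ρ)/√(ℓm) - (1-ρ)(1+mρ)/(2ℓmρ) + O(ℓ^{-3/2})`. -/
theorem stmt_15 (ρ : ℝ) (m : ℕ) (hm : 1 ≤ m) (hρ₁ : 0 < ρ) (hρ₂ : ρ < 1) :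
    ((fun ℓ : ℕ => gammaFun m ρ (1 - ρ) ℓ -
        Real.sqrt m * (1 - ρ) * (ℓ : ℝ) ^ ((m : ℝ) - 1 / 2) / ((m - 1).factorial : ℝ) -
        ((1 - ρ) * (1 + ((m : ℝ) - 2) * ρ) / (2 * ρ)) * (ℓ : ℝ) ^ (m - 1) /
          ((m - 1).factorial : ℝ))
      =O[atTop] fun ℓ : ℕ => (ℓ : ℝ) ^ ((m : ℝ) - 3 / 2)) ∧
    ((fun ℓ : ℕ => thetaFun m ρ (1 - ρ) ℓ -
        (1 - ρ) / Real.sqrt ((ℓ : ℝ) * (m : ℝ)) +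
        (1 - ρ) * (1 + (m : ℝ) * ρ) / (2 * (ℓ : ℝ) * (m : ℝ) * ρ))
      =O[atTop] fun ℓ : ℕ => (ℓ : ℝ) ^ (-(3 : ℝ) / 2)) := by
  classical
  have hK : (0:ℝ) < (((m-1).factorial : ℕ) : ℝ) := by exact_mod_cast (m-1).factorial_pos
  set K : ℝ := (((m-1).factorial : ℕ) : ℝ) with hKdef
  have hKne : K ≠ 0 := ne_of_gt hK
  have hmR : (1:ℝ) ≤ (m:ℝ) := by exact_mod_cast hm
  have hA := S15.AE3_A m hm
  have hB := S15.AE3_B m hm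
  have hD := S15.AE3_D m hm
  -- eta2
  have t21 := ((hA.const_mul (1 + ((m:ℝ)-1)*ρ)).raise_one).expcongr
    (show (m:ℝ)-1+1 = (m:ℝ) by ring)
  have t22 := ((hB.mul (S15.AE3_lin ρ (1-2*ρ))).const_mul (m:ℝ)).expcongr
    (show (m:ℝ)-1+1 = (m:ℝ) by ring)
  have t23 := (((hD.mul (S15.AE3_lin ((m:ℝ)*ρ) (((m:ℝ)-1)*(1-ρ) - (m:ℝ)*ρ))).expcongr
    (show (m:ℝ)-2+1 = (m:ℝ)-1 by ring)).raise_one).expcongr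
    (show (m:ℝ)-1+1 = (m:ℝ) by ring)
  have hEta2 := S15.AE3.congr (g := fun ℓ => eta2 ℓ m ρ) ((t21.add t22).add t23)
    (Filter.Eventually.of_forall (fun ℓ => by simp only [eta2]; ring))
  -- eta3
  have t32 := (hB.mul (S15.AE3_lin ((m:ℝ)*ρ^2) (-((m:ℝ)*ρ^2)))).expcongr
    (show (m:ℝ)-1+1 = (m:ℝ) by ring)
  have t33 := (((hD.mul (S15.AE3_lin (ρ*(1 + ((m:ℝ)-1)*ρ)) (-(ρ*(1 + ((m:ℝ)-1)*ρ))))).expcongr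
    (show (m:ℝ)-2+1 = (m:ℝ)-1 by ring)).raise_one).expcongr
    (show (m:ℝ)-1+1 = (m:ℝ) by ring)
  have hEta3 := S15.AE3.congr (g := fun ℓ => eta3 ℓ m ρ) ((t21.add t32).add t33)
    (Filter.Eventually.of_forall (fun ℓ => by simp only [eta3]; ring))
  -- eta4
  have t41 := ((hA.const_mul (ρ*(1 + ((m:ℝ)-1)*ρ))).raise_one).expcongr
    (show (m:ℝ)-1+1 = (m:ℝ) by ring)
  have t42 := ((hB.mul (S15.AE3_lin ρ (1-2*ρ))).const_mul ((m:ℝ)*ρ)).expcongr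
    (show (m:ℝ)-1+1 = (m:ℝ) by ring)
  have t43 := ((((hD.mul (S15.AE3_lin ρ (1-2*ρ))).const_mul (1 + ((m:ℝ)-1)*ρ)).expcongr
    (show (m:ℝ)-2+1 = (m:ℝ)-1 by ring)).raise_one).expcongr
    (show (m:ℝ)-1+1 = (m:ℝ) by ring)
  have hEta4 := S15.AE3.congr (g := fun ℓ => eta4 ℓ m ρ) ((t41.add t42).add t43)
    (Filter.Eventually.of_forall (fun ℓ => by simp only [eta4]; ring))
  -- eta1 (AE2 only)
  have hEta1 := S15.AE2.congr (g := fun ℓ => eta1 ℓ m ρ)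
    ((((hA.toAE2.mul hB.toAE2).mul (S15.AE3_lin ρ (1-ρ)).toAE2).const_mul
      ((m:ℝ)*(1-ρ))).expcongr (show (m:ℝ)-1+((m:ℝ)-1)+1 = 2*(m:ℝ)-1 by ring))
    (Filter.Eventually.of_forall (fun ℓ => by simp only [eta1]; ring))
  -- E = eta3 - rho*eta2 : AE3 at level m with two leading zeros
  have hE0 := S15.AE3.congr (g := fun ℓ => eta3 ℓ m ρ - ρ * eta2 ℓ m ρ)
    (hEta3.add (hEta2.const_mul (-ρ)))
    (Filter.Eventually.of_forall (fun ℓ => by ring))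
  have hE : S15.AE3 (fun ℓ => eta3 ℓ m ρ - ρ * eta2 ℓ m ρ) (m:ℝ) 0 0
      ((1-ρ)*(1+((m:ℝ)-2)*ρ)/K) := by
    refine hE0.coeff_congr ?_ ?_ ?_ <;> ring
  -- W = rho*eta2 - eta4 : AE3 at level m with two leading zeros
  have hW0 := S15.AE3.congr (g := fun ℓ => ρ * eta2 ℓ m ρ - eta4 ℓ m ρ)
    ((hEta2.const_mul ρ).add (hEta4.const_mul (-1)))
    (Filter.Eventually.of_forall (fun ℓ => by ring))
  have hW : S15.AE3 (fun ℓ => ρ * eta2 ℓ m ρ - eta4 ℓ m ρ) (m:ℝ) 0 0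
      (-(((m:ℝ)-1)*ρ*(1-ρ))/K) := by
    refine hW0.coeff_congr ?_ ?_ ?_ <;> ring
    -- sqrt m
  set s : ℝ := Real.sqrt (m:ℝ) with hsdef
  have hmpos : (0:ℝ) < (m:ℝ) := by linarith
  have hs : 0 < s := Real.sqrt_pos.2 hmpos
  have hs2 : s^2 = (m:ℝ) := Real.sq_sqrt hmpos.le
  -- clean eta1
  have hEta1c : S15.AE2 (fun ℓ => eta1 ℓ m ρ) (2*(m:ℝ)-1) ((m:ℝ)*ρ*(1-ρ)/K^2) 0 := by
    refine hEta1.coeff_congr ?_ ?_ <;> (field_simp; try ring)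
  -- E as bigO data
  have hEshift : (fun ℓ => (eta3 ℓ m ρ - ρ * eta2 ℓ m ρ)
      - ((1-ρ)*(1+((m:ℝ)-2)*ρ)/K) * S15.pw ((m:ℝ)-1) ℓ) =O[atTop] S15.pw ((m:ℝ)-3/2) := by
    unfold S15.AE3 at hE
    exact S15.bigO_congr_left hE (fun ℓ => by ring)
  have hEO : (fun ℓ => eta3 ℓ m ρ - ρ * eta2 ℓ m ρ) =O[atTop] S15.pw ((m:ℝ)-1) := by
    have h1 := hEshift.trans (S15.pw_isBigO (show (m:ℝ)-3/2 ≤ (m:ℝ)-1 by linarith))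
    have h2 := S15.const_mul_pw_isBigO ((1-ρ)*(1+((m:ℝ)-2)*ρ)/K) (le_refl ((m:ℝ)-1))
    exact S15.bigO_congr_left (IsBigO.add h1 h2) (fun ℓ => by ring)
  have hEEO : (fun ℓ => (eta3 ℓ m ρ - ρ * eta2 ℓ m ρ) * (eta3 ℓ m ρ - ρ * eta2 ℓ m ρ))
      =O[atTop] S15.pw (2*(m:ℝ)-1-1) := S15.mul_pw_bigO hEO hEO (by linarith)
  -- S
  have hS : S15.AE2 (fun ℓ => (eta2 ℓ m ρ * (1 - (1 - ρ)) - eta3 ℓ m ρ) ^ 2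
      + 4 * eta1 ℓ m ρ * (1 - ρ) * (1 - (1 - ρ))) (2*(m:ℝ)-1) (4*ρ^2*(1-ρ)^2*(m:ℝ)/K^2) 0 := by
    unfold S15.AE2 at hEta1c ⊢
    have h2 := hEta1c.const_mul_left (4*(1-ρ)*ρ)
    exact S15.bigO_congr_left (IsBigO.add hEEO h2) (fun ℓ => by ring)
  have h1ρ : (0:ℝ) < 1 - ρ := by linarith
  have hs0pos : (0:ℝ) < 4*ρ^2*(1-ρ)^2*(m:ℝ)/K^2 :=
    div_pos (mul_pos (mul_pos (mul_pos (by norm_num : (0:ℝ) < 4) (pow_pos hρ₁ 2))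
      (pow_pos h1ρ 2)) hmpos) (pow_pos hK 2)
  have hsqS := (hS.sqrt hs0pos).expcongr (show (2*(m:ℝ)-1)/2 = (m:ℝ)-1/2 by ring)
  have hsqrt_val : Real.sqrt (4*ρ^2*(1-ρ)^2*(m:ℝ)/K^2) = 2*ρ*(1-ρ)*s/K := by
    rw [show 4*ρ^2*(1-ρ)^2*(m:ℝ)/K^2 = (2*ρ*(1-ρ)*s/K)^2 by rw [← hs2]; ring]
    exact Real.sqrt_sq (le_of_lt (div_pos (mul_pos (mul_pos
      (mul_pos (by norm_num : (0:ℝ) < 2) hρ₁) h1ρ) hs) hK))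
  have hsqc : S15.AE2 (fun ℓ => Real.sqrt ((eta2 ℓ m ρ * (1 - (1 - ρ)) - eta3 ℓ m ρ) ^ 2
      + 4 * eta1 ℓ m ρ * (1 - ρ) * (1 - (1 - ρ)))) ((m:ℝ)-1/2) (2*ρ*(1-ρ)*s/K) 0 := by
    refine hsqS.coeff_congr hsqrt_val ?_
    simp
  -- gamma
  have hhE : (fun ℓ => (eta3 ℓ m ρ - ρ * eta2 ℓ m ρ)
      - ((1-ρ)*(1+((m:ℝ)-2)*ρ)/K) * S15.pw ((m:ℝ)-1/2-1/2) ℓ) =O[atTop]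
      S15.pw ((m:ℝ)-1/2-1) := by
    rw [show (m:ℝ)-1/2-1/2 = (m:ℝ)-1 by ring, show (m:ℝ)-1/2-1 = (m:ℝ)-3/2 by ring]
    exact hEshift
  have hsum := hsqc.add_shifted hhE
  have hγ := S15.AE2.congr (g := fun ℓ => gammaFun m ρ (1-ρ) ℓ) (hsum.const_mul (1/(2*ρ)))
    (Filter.Eventually.of_forall (fun ℓ => by simp only [gammaFun]; ring))
  have hγc : S15.AE2 (fun ℓ => gammaFun m ρ (1-ρ) ℓ) ((m:ℝ)-1/2) (s*(1-ρ)/K)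
      ((1-ρ)*(1+((m:ℝ)-2)*ρ)/(2*ρ*K)) := by
    refine hγ.coeff_congr ?_ ?_ <;> (field_simp; try ring)
  have hcast : ((m-1:ℕ):ℝ) = (m:ℝ)-1 := by rw [Nat.cast_sub hm]; norm_num
  constructor
  · -- part (i)
    unfold S15.AE2 at hγc
    refine hγc.congr' ?_ ?_
    · filter_upwards [eventually_ge_atTop 1] with ℓ h1
      rw [show (m:ℝ)-1/2-1/2 = ((m-1:ℕ):ℝ) by rw [hcast]; ring, S15.pw_nat _ h1,
        S15.pw_eq_rpow h1]
      field_simp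
      try ring
    · filter_upwards [eventually_ge_atTop 1] with ℓ h1
      rw [S15.pw_eq_rpow h1, show (m:ℝ)-1/2-1 = (m:ℝ)-3/2 by ring]
  · -- part (ii)
    -- W shifted form
    have hWshift : (fun ℓ => (ρ * eta2 ℓ m ρ - eta4 ℓ m ρ)
        - (-(((m:ℝ)-1)*ρ*(1-ρ))/K) * S15.pw ((m:ℝ)-1/2-1/2) ℓ) =O[atTop]
        S15.pw ((m:ℝ)-1/2-1) := by
      rw [show (m:ℝ)-1/2-1/2 = (m:ℝ)-1 by ring, show (m:ℝ)-1/2-1 = (m:ℝ)-3/2 by ring]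
      unfold S15.AE3 at hW
      exact S15.bigO_congr_left hW (fun ℓ => by ring)
    -- P = rho*gamma + W
    have hP := (hγc.const_mul ρ).add_shifted hWshift
    -- gamma^2 + eta1
    have hγ2 := (hγc.mul hγc).expcongr (show (m:ℝ)-1/2+((m:ℝ)-1/2) = 2*(m:ℝ)-1 by ring)
    have hR := hγ2.add hEta1c
    -- eta2 * gamma
    have hQ1 := (hEta2.toAE2.mul hγc).expcongr
      (show (m:ℝ)+((m:ℝ)-1/2) = 2*(m:ℝ)-1/2 by ring)
    have hRform : (fun ℓ => (gammaFun m ρ (1-ρ) ℓ * gammaFun m ρ (1-ρ) ℓ + eta1 ℓ m ρ)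
        - (s*(1-ρ)/K * (s*(1-ρ)/K) + (m:ℝ)*ρ*(1-ρ)/K^2) * S15.pw (2*(m:ℝ)-1/2-1/2) ℓ)
        =O[atTop] S15.pw (2*(m:ℝ)-1/2-1) := by
      rw [show 2*(m:ℝ)-1/2-1/2 = 2*(m:ℝ)-1 by ring,
        show 2*(m:ℝ)-1/2-1 = 2*(m:ℝ)-1-1/2 by ring]
      exact hR.sub_main
    have hQ := hQ1.add_shifted hRform
    have hq0pos : (0:ℝ) < (m:ℝ)*ρ*(1-ρ)*s/K^2 :=
      div_pos (mul_pos (mul_pos (mul_pos hmpos hρ₁) h1ρ) hs) (pow_pos hK 2)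
    have hQc : S15.AE2 (fun ℓ => eta2 ℓ m ρ * gammaFun m ρ (1-ρ) ℓ
        + (gammaFun m ρ (1-ρ) ℓ * gammaFun m ρ (1-ρ) ℓ + eta1 ℓ m ρ)) (2*(m:ℝ)-1/2)
        ((m:ℝ)*ρ*(1-ρ)*s/K^2) ((m:ℝ)*(1-ρ)*(3+((m:ℝ)-2)*ρ)/(2*K^2)) := by
      refine hQ.coeff_congr ?_ ?_
      · field_simp; try ring
      · rw [← hs2]; field_simp; try ring
    have hQinv := hQc.inv hq0pos
    have hθpre := ((hγc.mul hP).mul hQinv).expcongr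
      (show (m:ℝ)-1/2+((m:ℝ)-1/2)+(-(2*(m:ℝ)-1/2)) = -(1/2:ℝ) by ring)
    -- identify with thetaFun
    have hlow := hQc.lower hq0pos
    have hev : ∀ᶠ ℓ in atTop, gammaFun m ρ (1-ρ) ℓ
        * (ρ * gammaFun m ρ (1-ρ) ℓ + (ρ * eta2 ℓ m ρ - eta4 ℓ m ρ))
        * (eta2 ℓ m ρ * gammaFun m ρ (1-ρ) ℓ
          + (gammaFun m ρ (1-ρ) ℓ * gammaFun m ρ (1-ρ) ℓ + eta1 ℓ m ρ))⁻¹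
        = thetaFun m ρ (1-ρ) ℓ := by
      filter_upwards [hlow] with ℓ hQl
      have hpwb := S15.pw_pos (2*(m:ℝ)-1/2) ℓ
      have hq0' : (0:ℝ) < (m:ℝ)*ρ*(1-ρ)*s/K^2 / 2 * S15.pw (2*(m:ℝ)-1/2) ℓ :=
        mul_pos (by linarith [hq0pos]) hpwb
      have hQpos : (0:ℝ) < gammaFun m ρ (1-ρ) ℓ ^ 2
          + eta2 ℓ m ρ * gammaFun m ρ (1-ρ) ℓ + eta1 ℓ m ρ := by
        nlinarith [hQl]
      rw [show (eta2 ℓ m ρ * gammaFun m ρ (1-ρ) ℓ + (gammaFun m ρ (1-ρ) ℓ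
        * gammaFun m ρ (1-ρ) ℓ + eta1 ℓ m ρ)) = (gammaFun m ρ (1-ρ) ℓ ^ 2
        + eta2 ℓ m ρ * gammaFun m ρ (1-ρ) ℓ + eta1 ℓ m ρ) from by ring]
      simp only [thetaFun]
      linear_combination ρ * (mul_inv_cancel₀ (ne_of_gt hQpos))
    have hθ := S15.AE2.congr hθpre hev
    have hθc : S15.AE2 (fun ℓ => thetaFun m ρ (1-ρ) ℓ) (-(1/2:ℝ)) ((1-ρ)/s)
        (-((1-ρ)*(1+(m:ℝ)*ρ))/(2*(m:ℝ)*ρ)) := by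
      refine hθ.coeff_congr ?_ ?_
      · rw [← hs2]; field_simp; try ring
      · rw [← hs2]; field_simp; try ring
    unfold S15.AE2 at hθc
    refine hθc.congr' ?_ ?_
    · filter_upwards [eventually_ge_atTop 1] with ℓ h1
      have hx : (0:ℝ) < (ℓ:ℝ) := by exact_mod_cast h1
      have hsℓ : Real.sqrt (ℓ:ℝ) ≠ 0 := ne_of_gt (Real.sqrt_pos.2 hx)
      have e1 : S15.pw (-(1/2:ℝ)) ℓ = (Real.sqrt (ℓ:ℝ))⁻¹ := by
        rw [S15.pw_eq_rpow h1, Real.rpow_neg hx.le, Real.sqrt_eq_rpow]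
      have e2 : S15.pw (-(1/2:ℝ)-1/2) ℓ = ((ℓ:ℝ))⁻¹ := by
        rw [show (-(1/2:ℝ)-1/2) = -1 by norm_num, S15.pw_eq_rpow h1, Real.rpow_neg_one]
      rw [e1, e2, Real.sqrt_mul hx.le, ← hsdef]
      have hmne : (m:ℝ) ≠ 0 := ne_of_gt hmpos
      field_simp
      ring
    · filter_upwards [eventually_ge_atTop 1] with ℓ h1
      rw [S15.pw_eq_rpow h1, show (-(1/2:ℝ))-1 = (-3/2 : ℝ) by norm_num]
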